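/- There exists an increasing function f₁ : MorseGauges → MorseGauges such that in any geodesic metric space, if γ₁ and γ₂ are M-Morse quasi-geodesics with γ₁⁺ = γ₂⁻ (the endpoint of γ₁ equals the starting point of γ₂) and the concatenation γ = γ₁ · γ₂ is a quasi-geodesic, then γ is f₁(M)-Morse. -/

import Mathlib

open Set Metric

universe u

/-- `γ` restricted to `I` is a `(lam, eps)`-quasi-geodesic. -/
def IsQuasiGeodesicOn {X : Type*} [MetricSpace X] (γ : ℝ → X) (I : Set ℝ)
    (lam eps : ℝ) : Prop :=
  ∀ s ∈ I, ∀ t ∈ I,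
    (1 / lam) * |s - t| - eps ≤ dist (γ s) (γ t) ∧ dist (γ s) (γ t) ≤ lam * |s - t| + eps

/-- `γ` restricted to `I` is a (unit-speed) geodesic. -/
def IsGeodesicOn {X : Type*} [MetricSpace X] (γ : ℝ → X) (I : Set ℝ) : Prop :=
  ∀ s ∈ I, ∀ t ∈ I, dist (γ s) (γ t) = |s - t|

/-- A metric space is geodesic if any two points are joined by a geodesic. -/
def GeodesicSpace (X : Type*) [MetricSpace X] : Prop :=
  ∀ x y : X, ∃ γ : ℝ → X, γ 0 = x ∧ γ (dist x y) = y ∧ IsGeodesicOn γ (Icc 0 (dist x y))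

/-- A Morse gauge: an increasing map `ℝ≥1 × ℝ≥0 → ℝ≥0`, continuous in the second argument. -/
def IsMorseGauge (M : ℝ → ℝ → ℝ) : Prop :=
  (∀ l e, 1 ≤ l → 0 ≤ e → 0 ≤ M l e) ∧
  (∀ l l' e e', 1 ≤ l → 0 ≤ e → l ≤ l' → e ≤ e' → M l e ≤ M l' e') ∧
  (∀ l, 1 ≤ l → ContinuousOn (fun e => M l e) (Ici 0))

/-- Pointwise partial order on Morse gauges (on the domain `ℝ≥1 × ℝ≥0`). -/
def GaugeLE (M N : ℝ → ℝ → ℝ) : Prop :=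
  ∀ l e, 1 ≤ l → 0 ≤ e → M l e ≤ N l e

/-- `γ` restricted to `I` is `M`-Morse: every continuous `(lam, eps)`-quasi-geodesic with
endpoints on `γ` lies in the closed `M lam eps`-neighbourhood of `γ`. -/
def IsMorseWith {X : Type*} [MetricSpace X] (M : ℝ → ℝ → ℝ) (γ : ℝ → X) (I : Set ℝ) : Prop :=
  ∀ lam eps : ℝ, 1 ≤ lam → 0 ≤ eps →
    ∀ (η : ℝ → X) (a b : ℝ), a ≤ b →
      ContinuousOn η (Icc a b) → IsQuasiGeodesicOn η (Icc a b) lam eps →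
      η a ∈ γ '' I → η b ∈ γ '' I →
      ∀ t ∈ Icc a b, ∃ s ∈ I, dist (η t) (γ s) ≤ M lam eps

/-- The constant `δ_M` associated to a Morse gauge `M`. -/
def morseDelta (M : ℝ → ℝ → ℝ) : ℝ :=
  max (4 * M 1 (2 * M 5 0) + 2 * M 5 0) (8 * M 3 0)

lemma quasi_mono {X : Type*} [MetricSpace X] {γ : ℝ → X} {I J : Set ℝ} {lam eps : ℝ}
    (h : IsQuasiGeodesicOn γ I lam eps) (hJ : J ⊆ I) : IsQuasiGeodesicOn γ J lam eps :=
  fun s hs t ht => h s (hJ hs) t (hJ ht)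

lemma continuousOn_union_closed {X Y : Type*} [TopologicalSpace X] [TopologicalSpace Y]
    {f : X → Y} {s t : Set X} (hs : IsClosed s) (ht : IsClosed t)
    (hfs : ContinuousOn f s) (hft : ContinuousOn f t) : ContinuousOn f (s ∪ t) := by
  intro x hx
  have h1 : ContinuousWithinAt f s x := by
    by_cases hxs : x ∈ s
    · exact hfs x hxs
    · exact continuousWithinAt_of_notMem_closure (by rwa [hs.closure_eq])
  have h2 : ContinuousWithinAt f t x := by
    by_cases hxt : x ∈ t
    · exact hft x hxt
    · exact continuousWithinAt_of_notMem_closure (by rwa [ht.closure_eq])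
  exact h1.union h2

lemma quasi_reverse {X : Type*} [MetricSpace X] {η : ℝ → X} {p q lam eps : ℝ}
    (h : IsQuasiGeodesicOn η (Icc p q) lam eps) :
    IsQuasiGeodesicOn (fun t => η (p + q - t)) (Icc p q) lam eps := by
  intro s hs t ht
  have hs' : p + q - s ∈ Icc p q := ⟨by linarith [hs.2], by linarith [hs.1]⟩
  have ht' : p + q - t ∈ Icc p q := ⟨by linarith [ht.2], by linarith [ht.1]⟩
  have := h _ hs' _ ht'
  rwa [show (p + q - s) - (p + q - t) = t - s by ring, abs_sub_comm t s] at this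

lemma cont_reverse {X : Type*} [MetricSpace X] {η : ℝ → X} {p q : ℝ}
    (h : ContinuousOn η (Icc p q)) :
    ContinuousOn (fun t => η (p + q - t)) (Icc p q) :=
  h.comp ((continuous_const.sub continuous_id).continuousOn)
    (fun t ht => ⟨by simpa using by linarith [ht.2], by simpa using by linarith [ht.1]⟩)

lemma extend_geodesic {X : Type*} [MetricSpace X] {η : ℝ → X} {p q lam eps : ℝ} {y : X}
    {g : ℝ → X}
    (hpq : p ≤ q) (hlam : 1 ≤ lam) (heps : 0 ≤ eps)
    (hcont : ContinuousOn η (Icc p q)) (hqg : IsQuasiGeodesicOn η (Icc p q) lam eps)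
    (hg0 : g 0 = η q) (hgL : g (dist (η q) y) = y)
    (hgeo : IsGeodesicOn g (Icc 0 (dist (η q) y)))
    (hmin : ∀ s ∈ Icc p q, dist (η q) y ≤ dist (η s) y) :
    ∃ ζ : ℝ → X,
      ContinuousOn ζ (Icc p (q + dist (η q) y)) ∧
      IsQuasiGeodesicOn ζ (Icc p (q + dist (η q) y)) (3 * lam) (3 * eps) ∧
      ζ p = η p ∧ ζ (q + dist (η q) y) = y ∧ ∀ t ∈ Icc p q, ζ t = η t := by
  classical
  set L := dist (η q) y with hLdef
  have hL0 : 0 ≤ L := dist_nonneg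
  have hlam0 : (0:ℝ) < lam := lt_of_lt_of_le one_pos hlam
  set ζ : ℝ → X := fun t => if t ≤ q then η t else g (t - q) with hζdef
  have heq : ∀ t ∈ Icc p q, ζ t = η t := fun t ht => if_pos ht.2
  have hge : ∀ t ∈ Icc q (q + L), ζ t = g (t - q) := by
    intro t ht
    by_cases h : t ≤ q
    · have h' : t = q := le_antisymm h ht.1
      simp [hζdef, h', hg0]
    · simp [hζdef, h]
  have hgcont : ContinuousOn g (Icc 0 L) := by
    rw [Metric.continuousOn_iff]
    intro x hx ε hε
    refine ⟨ε, hε, fun z hz hd => ?_⟩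
    rw [hgeo z hz x hx, ← Real.dist_eq]
    exact hd
  have hc1 : ContinuousOn ζ (Icc p q) := hcont.congr heq
  have hc2 : ContinuousOn ζ (Icc q (q + L)) := by
    have hm : MapsTo (fun t => t - q) (Icc q (q + L)) (Icc 0 L) :=
      fun t ht => ⟨by dsimp only; linarith [ht.1], by dsimp only; linarith [ht.2]⟩
    exact (hgcont.comp ((continuous_id.sub continuous_const).continuousOn) hm).congr hge
  have hsub : Icc p (q + L) ⊆ Icc p q ∪ Icc q (q + L) := fun x hx =>
    (le_total x q).imp (fun h => ⟨hx.1, h⟩) (fun h => ⟨h, hx.2⟩)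
  have hcζ : ContinuousOn ζ (Icc p (q + L)) :=
    (continuousOn_union_closed isClosed_Icc isClosed_Icc hc1 hc2).mono hsub
  have key : ∀ s ∈ Icc p (q + L), ∀ t ∈ Icc p (q + L), s ≤ t →
      1 / (3 * lam) * |s - t| - 3 * eps ≤ dist (ζ s) (ζ t) ∧
      dist (ζ s) (ζ t) ≤ 3 * lam * |s - t| + 3 * eps := by
    intro s hs t ht hst
    have habs : |s - t| = t - s := by
      rw [abs_sub_comm]; exact abs_of_nonneg (by linarith)
    have h13 : 1 / (3 * lam) ≤ 1 / lam := by
      apply one_div_le_one_div_of_le hlam0; nlinarith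
    have h13' : 1 / (3 * lam) ≤ 1 / 3 := by
      apply one_div_le_one_div_of_le (by norm_num); nlinarith
    have hinv3 : 1 / (3 * lam) = (1 / 3) * (1 / lam) := by
      rw [one_div, one_div, one_div, mul_inv]
    rcases le_or_gt t q with h1 | h1
    · -- both in η part
      have hsI : s ∈ Icc p q := ⟨hs.1, le_trans hst h1⟩
      have htI : t ∈ Icc p q := ⟨ht.1, h1⟩
      rw [heq s hsI, heq t htI]
      obtain ⟨hlo, hhi⟩ := hqg s hsI t htI
      have e1 : 1 / (3 * lam) * |s - t| ≤ 1 / lam * |s - t| :=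
        mul_le_mul_of_nonneg_right h13 (abs_nonneg _)
      have e2 : lam * |s - t| ≤ 3 * lam * |s - t| := by
        nlinarith [abs_nonneg (s - t)]
      exact ⟨by linarith, by linarith⟩
    · have htu : t - q ∈ Icc (0:ℝ) L := ⟨by linarith, by linarith [ht.2]⟩
      have hζt : ζ t = g (t - q) := hge t ⟨h1.le, ht.2⟩
      rcases le_or_gt s q with h2 | h2
      · -- mixed case
        have hsI : s ∈ Icc p q := ⟨hs.1, h2⟩
        rw [heq s hsI, hζt]
        have hqI : q ∈ Icc p q := ⟨hpq, le_refl q⟩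
        obtain ⟨hlo, hhi⟩ := hqg s hsI q hqI
        have habs2 : |s - q| = q - s := by
          rw [abs_sub_comm]; exact abs_of_nonneg (by linarith)
        rw [habs2] at hlo hhi
        have d1 : dist (g (t - q)) y = L - (t - q) := by
          have h := hgeo (t - q) htu L ⟨hL0, le_refl L⟩
          rw [hgL] at h
          rw [h, abs_of_nonpos (by linarith [htu.2])]; ring
        have d2 : dist (η q) (g (t - q)) = t - q := by
          have h := hgeo 0 ⟨le_refl 0, hL0⟩ (t - q) htu
          rw [hg0] at h
          rw [h, abs_of_nonpos (by linarith [htu.1])]; ring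
        have hminS := hmin s hsI
        have dl1 : t - q ≤ dist (η s) (g (t - q)) := by
          have htri := dist_triangle (η s) (g (t - q)) y
          linarith [d1, hminS]
        have dl2 : dist (η s) (η q) - (t - q) ≤ dist (η s) (g (t - q)) := by
          have htri := dist_triangle (η s) (g (t - q)) (η q)
          rw [dist_comm (g (t - q)) (η q)] at htri
          linarith [d2]
        have du : dist (η s) (g (t - q)) ≤ dist (η s) (η q) + (t - q) := by
          have htri := dist_triangle (η s) (η q) (g (t - q))
          linarith [d2, dist_triangle (η s) (η q) (g (t-q))]
        constructor
        · rw [habs]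
          have f1 : 1 / (3 * lam) * (t - s) = 1 / (3 * lam) * (q - s) + 1 / (3 * lam) * (t - q) := by
            ring
          have f2 : 1 / (3 * lam) * (q - s) = (1/3) * (1 / lam * (q - s)) := by
            rw [hinv3]; ring
          have f3 : 1 / (3 * lam) * (t - q) ≤ (1/3) * (t - q) := by
            have := mul_le_mul_of_nonneg_right h13' (le_trans htu.1 (le_refl (t - q)))
            nlinarith [htu.1]
          linarith
        · rw [habs]
          have g1 : lam * (t - s) = lam * (q - s) + lam * (t - q) := by ring
          have g2 : t - q ≤ lam * (t - q) := by nlinarith [htu.1]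
          have g3 : 0 ≤ lam * (t - s) := mul_nonneg hlam0.le (by linarith)
          nlinarith
      · -- both in geodesic part
        have hζs : ζ s = g (s - q) := hge s ⟨h2.le, hs.2⟩
        rw [hζs, hζt]
        have hsu : s - q ∈ Icc (0:ℝ) L := ⟨by linarith, by linarith [hs.2]⟩
        have hd : dist (g (s - q)) (g (t - q)) = |s - t| := by
          rw [hgeo (s - q) hsu (t - q) htu, show (s - q) - (t - q) = s - t by ring]
        rw [hd]
        constructor
        · have e1 : 1 / (3 * lam) * |s - t| ≤ 1 * |s - t| :=
            mul_le_mul_of_nonneg_right (le_trans h13' (by norm_num)) (abs_nonneg _)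
          linarith [abs_nonneg (s - t)]
        · nlinarith [abs_nonneg (s - t), mul_nonneg (show (0:ℝ) ≤ 3 * lam - 1 by linarith) (abs_nonneg (s - t))]
  refine ⟨ζ, hcζ, ?_, heq p ⟨le_refl p, hpq⟩, ?_, heq⟩
  · intro s hs t ht
    rcases le_total s t with h | h
    · exact key s hs t ht h
    · have := key t ht s hs h
      rwa [dist_comm (ζ t) (ζ s), abs_sub_comm t s] at this
  · have h := hge (q + L) ⟨by linarith, le_refl _⟩
    rw [h, show q + L - q = L by ring, hgL]

lemma mixed_case {X : Type u} [MetricSpace X] (hX : GeodesicSpace X) {M : ℝ → ℝ → ℝ}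
    {γ : ℝ → X} {a b c : ℝ}
    (hab : a ≤ b) (hbc : b ≤ c)
    (hMab : IsMorseWith M γ (Icc a b)) (hMbc : IsMorseWith M γ (Icc b c))
    {lam eps : ℝ} (hlam : 1 ≤ lam) (heps : 0 ≤ eps)
    {η : ℝ → X} {p q : ℝ} (hpq : p ≤ q) (hcont : ContinuousOn η (Icc p q))
    (hqg : IsQuasiGeodesicOn η (Icc p q) lam eps)
    (h0 : η p ∈ γ '' Icc a b) (h1 : η q ∈ γ '' Icc b c) :
    ∀ t ∈ Icc p q, ∃ s ∈ Icc a c, dist (η t) (γ s) ≤ M (3 * lam) (3 * eps) := by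
  have h3lam : 1 ≤ 3 * lam := by linarith
  have h3eps : 0 ≤ 3 * eps := by linarith
  have hcd : ContinuousOn (fun u => dist (η u) (γ b)) (Icc p q) :=
    continuous_dist.comp_continuousOn (hcont.prodMk continuousOn_const)
  obtain ⟨t', ht'I, hmin'⟩ := isCompact_Icc.exists_isMinOn (nonempty_Icc.2 hpq) hcd
  have hmin : ∀ s ∈ Icc p q, dist (η t') (γ b) ≤ dist (η s) (γ b) :=
    fun s hs => isMinOn_iff.mp hmin' s hs
  intro t ht
  rcases le_total t t' with htt | htt
  · -- first part: use the piece on [a, b]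
    obtain ⟨g, hg0, hgL, hgeo⟩ := hX (η t') (γ b)
    obtain ⟨ζ, hζc, hζq, hζp, hζe, hζeq⟩ :=
      extend_geodesic (p := p) (q := t') (y := γ b) ht'I.1 hlam heps
        (hcont.mono (Icc_subset_Icc_right ht'I.2))
        (quasi_mono hqg (Icc_subset_Icc_right ht'I.2)) hg0 hgL hgeo
        (fun s hs => hmin s (Icc_subset_Icc_right ht'I.2 hs))
    have hL0 : 0 ≤ dist (η t') (γ b) := dist_nonneg
    have hres := hMab (3 * lam) (3 * eps) h3lam h3eps ζ p (t' + dist (η t') (γ b))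
      (by linarith [ht'I.1]) hζc hζq
      (by rw [hζp]; exact h0)
      (by rw [hζe]; exact ⟨b, ⟨hab, le_refl b⟩, rfl⟩)
    obtain ⟨s, hsI, hsd⟩ := hres t ⟨ht.1, by linarith⟩
    refine ⟨s, ⟨hsI.1, hsI.2.trans hbc⟩, ?_⟩
    rwa [hζeq t ⟨ht.1, htt⟩] at hsd
  · -- second part: reverse and use the piece on [b, c]
    set η' : ℝ → X := fun u => η (t' + q - u) with hη'def
    have hq' : η' q = η t' := by simp [hη'def]
    have ht'' : η' t' = η q := by simp [hη'def]
    have hsub : Icc t' q ⊆ Icc p q := Icc_subset_Icc_left ht'I.1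
    obtain ⟨g, hg0, hgL, hgeo⟩ := hX (η t') (γ b)
    have hg0' : g 0 = η' q := by rw [hq']; exact hg0
    have hgL' : g (dist (η' q) (γ b)) = γ b := by rw [hq']; exact hgL
    have hgeo' : IsGeodesicOn g (Icc 0 (dist (η' q) (γ b))) := by rw [hq']; exact hgeo
    have hmin'' : ∀ s ∈ Icc t' q, dist (η' q) (γ b) ≤ dist (η' s) (γ b) := by
      intro s hs
      rw [hq']
      exact hmin (t' + q - s) ⟨by linarith [hs.2, ht'I.1], by linarith [hs.1]⟩
    obtain ⟨ζ, hζc, hζq, hζp, hζe, hζeq⟩ :=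
      extend_geodesic (p := t') (q := q) (y := γ b) ht'I.2 hlam heps
        ((cont_reverse (p := t') (q := q) (hcont.mono hsub)))
        (quasi_reverse (quasi_mono hqg hsub)) hg0' hgL' hgeo' hmin''
    have hL0 : 0 ≤ dist (η' q) (γ b) := dist_nonneg
    have hres := hMbc (3 * lam) (3 * eps) h3lam h3eps ζ t' (q + dist (η' q) (γ b))
      (by linarith [ht'I.2]) hζc hζq
      (by rw [hζp, show t' + q - t' = q by ring]; exact h1)
      (by rw [hζe]; exact ⟨b, ⟨le_refl b, hbc⟩, rfl⟩)
    have huI : t' + q - t ∈ Icc t' q := ⟨by linarith [ht.2], by linarith [htt]⟩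
    obtain ⟨s, hsI, hsd⟩ := hres (t' + q - t) ⟨huI.1, by linarith [huI.2]⟩
    refine ⟨s, ⟨hab.trans hsI.1, hsI.2⟩, ?_⟩
    rw [hζeq _ huI, show t' + q - (t' + q - t) = t by ring] at hsd
    exact hsd

/-- There is an increasing function `f₁ : 𝓜 → 𝓜` such that, in any geodesic
metric space, if `γ₁` and `γ₂` are `M`-Morse quasi-geodesics with the endpoint of `γ₁`
equal to the starting point of `γ₂`, and the concatenation `γ` is itself a quasi-geodesic,
then `γ` is `f₁ M`-Morse.  (The concatenation is encoded as a single map `γ` on `[a, c]`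
whose restrictions to `[a, b]` and `[b, c]` are the given `M`-Morse quasi-geodesics.) -/
theorem statement3 : ∃ f₁ : (ℝ → ℝ → ℝ) → (ℝ → ℝ → ℝ),
    (∀ M, IsMorseGauge M → IsMorseGauge (f₁ M)) ∧
    (∀ M N, IsMorseGauge M → IsMorseGauge N → GaugeLE M N → GaugeLE (f₁ M) (f₁ N)) ∧
    ∀ (X : Type u) [inst : MetricSpace X], GeodesicSpace X →
      ∀ (M : ℝ → ℝ → ℝ), IsMorseGauge M →
      ∀ (γ : ℝ → X) (a b c lam₁ eps₁ lam₂ eps₂ lam eps : ℝ),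
        a ≤ b → b ≤ c →
        1 ≤ lam₁ → 0 ≤ eps₁ → 1 ≤ lam₂ → 0 ≤ eps₂ → 1 ≤ lam → 0 ≤ eps →
        IsQuasiGeodesicOn γ (Icc a b) lam₁ eps₁ → IsMorseWith M γ (Icc a b) →
        IsQuasiGeodesicOn γ (Icc b c) lam₂ eps₂ → IsMorseWith M γ (Icc b c) →
        IsQuasiGeodesicOn γ (Icc a c) lam eps →
        IsMorseWith (f₁ M) γ (Icc a c) := by
  refine ⟨fun M l e => M (3 * l) (3 * e), ?_, ?_, ?_⟩
  · rintro M ⟨h1, h2, h3⟩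
    refine ⟨fun l e hl he => h1 _ _ (by linarith) (by linarith),
      fun l l' e e' hl he hll hee => h2 _ _ _ _ (by linarith) (by linarith) (by linarith)
        (by linarith), fun l hl => ?_⟩
    exact (h3 (3 * l) (by linarith)).comp
      ((continuous_const.mul continuous_id).continuousOn)
      (fun e he => mem_Ici.mpr (mul_nonneg (by norm_num : (0:ℝ) ≤ 3) (mem_Ici.mp he)))
  · intro M N _ _ hle l e hl he
    exact hle (3 * l) (3 * e) (by linarith) (by linarith)
  · intro X inst hX M hM γ a b c lam₁ eps₁ lam₂ eps₂ lam eps hab hbc hl1 he1 hl2 he2 hl he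
      hq1 hMor1 hq2 hMor2 hq
    intro lam' eps' hlam' heps' η p q hpq hcont hqg hη0 hη1 t ht
    obtain ⟨s₀, hs₀, he₀⟩ := hη0
    obtain ⟨s₁, hs₁, he₁⟩ := hη1
    have hmono : M lam' eps' ≤ M (3 * lam') (3 * eps') :=
      hM.2.1 _ _ _ _ hlam' heps' (by linarith) (by linarith)
    rcases le_total s₀ b with hb₀ | hb₀ <;> rcases le_total s₁ b with hb₁ | hb₁
    · -- both on [a, b]
      obtain ⟨s, hsI, hsd⟩ := hMor1 lam' eps' hlam' heps' η p q hpq hcont hqg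
        ⟨s₀, ⟨hs₀.1, hb₀⟩, he₀⟩ ⟨s₁, ⟨hs₁.1, hb₁⟩, he₁⟩ t ht
      exact ⟨s, ⟨hsI.1, hsI.2.trans hbc⟩, hsd.trans hmono⟩
    · -- s₀ on [a,b], s₁ on [b,c]
      exact mixed_case hX hab hbc hMor1 hMor2 hlam' heps' hpq hcont hqg
        ⟨s₀, ⟨hs₀.1, hb₀⟩, he₀⟩ ⟨s₁, ⟨hb₁, hs₁.2⟩, he₁⟩ t ht
    · -- s₀ on [b,c], s₁ on [a,b] : reverse η
      have h0' : (fun u => η (p + q - u)) p ∈ γ '' Icc a b := by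
        dsimp only; rw [show p + q - p = q by ring]
        exact ⟨s₁, ⟨hs₁.1, hb₁⟩, he₁⟩
      have h1' : (fun u => η (p + q - u)) q ∈ γ '' Icc b c := by
        dsimp only; rw [show p + q - q = p by ring]
        exact ⟨s₀, ⟨hb₀, hs₀.2⟩, he₀⟩
      obtain ⟨s, hsI, hsd⟩ := mixed_case hX hab hbc hMor1 hMor2 hlam' heps' hpq
        (cont_reverse hcont) (quasi_reverse hqg) h0' h1' (p + q - t)
        ⟨by linarith [ht.2], by linarith [ht.1]⟩
      rw [show p + q - (p + q - t) = t by ring] at hsd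
      exact ⟨s, hsI, hsd⟩
    · -- both on [b, c]
      obtain ⟨s, hsI, hsd⟩ := hMor2 lam' eps' hlam' heps' η p q hpq hcont hqg
        ⟨s₀, ⟨hb₀, hs₀.2⟩, he₀⟩ ⟨s₁, ⟨hb₁, hs₁.2⟩, he₁⟩ t ht
      exact ⟨s, ⟨hab.trans hsI.1, hsI.2⟩, hsd.trans hmono⟩
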